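/- Let H₁ ∈ ℝ^{m₁×d}, H₂ ∈ ℝ^{m₂×d} have full row rank, y₁ ∈ ℝ^{m₁}, y₂ ∈ ℝ^{m₂}, and suppose the solution sets {x : H₁x = y₁} and {x : H₂x = y₂} are equal and nonempty. Let Σ ∈ ℝ^{d×d} be positive definite. Then for every t ∈ ℝ^d, (H₁t − y₁)ᵀ(H₁ΣH₁ᵀ)⁻¹(H₁t − y₁) = (H₂t − y₂)ᵀ(H₂ΣH₂ᵀ)⁻¹(H₂t − y₂). -/

import Mathlib

open Matrix

lemma aux_surj {m d : ℕ} (H : Matrix (Fin m) (Fin d) ℝ) (h : H.rank = m) :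
    Function.Surjective H.mulVec := by
  have : LinearMap.range H.mulVecLin = ⊤ := by
    apply Submodule.eq_top_of_finrank_eq
    rw [← Matrix.rank, h, Module.finrank_pi, Fintype.card_fin]
  intro y
  exact (LinearMap.range_eq_top.mp this) y

lemma aux_injT {m d : ℕ} (H : Matrix (Fin m) (Fin d) ℝ) (h : H.rank = m) :
    Function.Injective Hᵀ.mulVec := by
  have h1 := LinearMap.finrank_range_add_finrank_ker Hᵀ.mulVecLin
  rw [← Matrix.rank, Matrix.rank_transpose, h, Module.finrank_pi, Fintype.card_fin] at h1
  have hk : Module.finrank ℝ (LinearMap.ker Hᵀ.mulVecLin) = 0 := by omega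
  exact LinearMap.ker_eq_bot.mp (Submodule.finrank_eq_zero.mp hk)

lemma aux_posdef {m d : ℕ} (H : Matrix (Fin m) (Fin d) ℝ) (h : H.rank = m)
    (Sig : Matrix (Fin d) (Fin d) ℝ) (hSig : Sig.PosDef) :
    (H * Sig * Hᵀ).PosDef := by
  refine posDef_iff_dotProduct_mulVec.mpr ⟨?_, ?_⟩
  · have hs : Sigᵀ = Sig := hSig.isHermitian.eq
    show (H * Sig * Hᵀ)ᴴ = H * Sig * Hᵀ
    simp [conjTranspose_mul, Matrix.mul_assoc, hs]
  · intro x hx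
    have hv : Hᵀ.mulVec x ≠ 0 := by
      intro h0
      exact hx (aux_injT H h (by simpa using h0))
    have := hSig.dotProduct_mulVec_pos hv
    simp only [star_trivial] at this ⊢
    calc x ⬝ᵥ (H * Sig * Hᵀ) *ᵥ x
        = (Hᵀ *ᵥ x) ⬝ᵥ Sig *ᵥ (Hᵀ *ᵥ x) := by
          rw [← mulVec_mulVec, ← mulVec_mulVec, dotProduct_mulVec, ← mulVec_transpose]
      _ > 0 := this

theorem WTS_invariance {d m₁ m₂ : ℕ}
    (H₁ : Matrix (Fin m₁) (Fin d) ℝ) (H₂ : Matrix (Fin m₂) (Fin d) ℝ)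
    (y₁ : Fin m₁ → ℝ) (y₂ : Fin m₂ → ℝ)
    (h₁ : H₁.rank = m₁) (h₂ : H₂.rank = m₂)
    (hne : {x : Fin d → ℝ | H₁.mulVec x = y₁}.Nonempty)
    (heq : {x : Fin d → ℝ | H₁.mulVec x = y₁} = {x : Fin d → ℝ | H₂.mulVec x = y₂})
    (Sig : Matrix (Fin d) (Fin d) ℝ) (hSig : Sig.PosDef) :
    ∀ t : Fin d → ℝ,
      dotProduct (H₁.mulVec t - y₁) ((H₁ * Sig * H₁ᵀ)⁻¹.mulVec (H₁.mulVec t - y₁))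
        = dotProduct (H₂.mulVec t - y₂) ((H₂ * Sig * H₂ᵀ)⁻¹.mulVec (H₂.mulVec t - y₂)) := by
  obtain ⟨x₀, hx₀⟩ := hne
  have hx₀' : H₂.mulVec x₀ = y₂ := by
    have : x₀ ∈ {x : Fin d → ℝ | H₂.mulVec x = y₂} := heq ▸ hx₀
    exact this
  have hiff : ∀ x, H₁.mulVec x = y₁ ↔ H₂.mulVec x = y₂ := fun x => Set.ext_iff.mp heq x
  -- equal kernels
  have hker : LinearMap.ker H₁.mulVecLin = LinearMap.ker H₂.mulVecLin := by
    ext x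
    simp only [LinearMap.mem_ker, mulVecLin_apply]
    constructor
    · intro h
      have : H₁.mulVec (x₀ + x) = y₁ := by rw [mulVec_add, hx₀, h, add_zero]
      have := (hiff _).mp this
      rw [mulVec_add, hx₀'] at this
      rwa [add_eq_left] at this
    · intro h
      have : H₂.mulVec (x₀ + x) = y₂ := by rw [mulVec_add, hx₀', h, add_zero]
      have := (hiff _).mpr this
      rwa [mulVec_add, hx₀, add_eq_left] at this
  -- m₁ = m₂
  have hrn₁ := LinearMap.finrank_range_add_finrank_ker H₁.mulVecLin
  have hrn₂ := LinearMap.finrank_range_add_finrank_ker H₂.mulVecLin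
  rw [← Matrix.rank, h₁, hker] at hrn₁
  rw [← Matrix.rank, h₂] at hrn₂
  have hm : m₁ = m₂ := by omega
  subst hm
  -- construct A
  obtain ⟨g, hg⟩ := H₁.mulVecLin.exists_rightInverse_of_surjective
    (by rw [LinearMap.range_eq_top]; exact aux_surj H₁ h₁)
  set f : (Fin m₁ → ℝ) →ₗ[ℝ] (Fin m₁ → ℝ) := H₂.mulVecLin ∘ₗ g with hf
  have hfH : ∀ x, f (H₁.mulVec x) = H₂.mulVec x := by
    intro x
    have hk : g (H₁.mulVec x) - x ∈ LinearMap.ker H₁.mulVecLin := by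
      simp only [LinearMap.mem_ker, map_sub, mulVecLin_apply]
      have := congrFun (congrArg DFunLike.coe hg) (H₁.mulVec x)
      simp only [LinearMap.comp_apply, LinearMap.id_apply, mulVecLin_apply] at this
      rw [this, sub_self]
    rw [hker] at hk
    simp only [LinearMap.mem_ker, map_sub, mulVecLin_apply] at hk
    have := sub_eq_zero.mp hk
    simpa [hf, mulVecLin_apply] using this
  set A : Matrix (Fin m₁) (Fin m₁) ℝ := LinearMap.toMatrix' f with hA
  have hAmul : ∀ v, A.mulVec v = f v := by
    intro v
    rw [hA, ← Matrix.toLin'_apply, Matrix.toLin'_toMatrix']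
  have hfsurj : Function.Surjective f := by
    intro y
    obtain ⟨x, hx⟩ := aux_surj H₂ h₂ y
    obtain ⟨z, hz⟩ := aux_surj H₁ h₁ (H₁.mulVec x)
    exact ⟨H₁.mulVec x, by rw [hfH x, hx]⟩
  have hfinj : Function.Injective f :=
    (LinearMap.injective_iff_surjective).mpr hfsurj
  have hAunit : IsUnit A := by
    rw [← Matrix.mulVec_injective_iff_isUnit]
    intro u v huv
    exact hfinj (by rwa [← hAmul, ← hAmul])
  have hAdet : IsUnit A.det := (Matrix.isUnit_iff_isUnit_det A).mp hAunit
  -- matrix identities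
  have hAH : A * H₁ = H₂ := by
    apply Matrix.toLin'.injective
    apply LinearMap.ext
    intro x
    simp only [Matrix.toLin'_apply, ← Matrix.mulVec_mulVec]
    rw [hAmul, hfH]
  have hAy : A.mulVec y₁ = y₂ := by
    rw [← hx₀, ← hx₀', hAmul, hfH]
  -- PosDef core matrix
  have hM : (H₁ * Sig * H₁ᵀ).PosDef := aux_posdef H₁ h₁ Sig hSig
  have hMdet : IsUnit (H₁ * Sig * H₁ᵀ).det := (Matrix.isUnit_iff_isUnit_det _).mp hM.isUnit
  have hcong : H₂ * Sig * H₂ᵀ = A * (H₁ * Sig * H₁ᵀ) * Aᵀ := by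
    rw [← hAH, Matrix.transpose_mul]
    simp only [Matrix.mul_assoc]
  intro t
  have hv : H₂.mulVec t - y₂ = A.mulVec (H₁.mulVec t - y₁) := by
    rw [Matrix.mulVec_sub, hAy, hAmul, hfH]
  set v := H₁.mulVec t - y₁ with hvdef
  set M := H₁ * Sig * H₁ᵀ with hMdef
  rw [hv, hcong]
  have hinv : (A * M * Aᵀ)⁻¹ = (A⁻¹)ᵀ * M⁻¹ * A⁻¹ := by
    rw [Matrix.mul_inv_rev, Matrix.mul_inv_rev, Matrix.transpose_nonsing_inv, Matrix.mul_assoc]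
  rw [hinv]
  have hcancel : A⁻¹.mulVec (A.mulVec v) = v := by
    rw [Matrix.mulVec_mulVec, Matrix.nonsing_inv_mul A hAdet, Matrix.one_mulVec]
  rw [← Matrix.mulVec_mulVec, ← Matrix.mulVec_mulVec, hcancel]
  conv_rhs => rw [Matrix.dotProduct_mulVec, Matrix.vecMul_transpose, hcancel]
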